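/- Let n ≥ 1, α ∈ (0,1], u > 0, F : [0,1]^n → [0,1], x ∈ [0,1]^n and τ ∈ [0,1]. Then |H(x,τ) − H̃(x,τ)| ≤ u·(1 + 1/α)/2. -/

import Mathlib

open MeasureTheory

/-- The CVaR auxiliary function `H(x,τ) = τ - (1/α)·max{τ - F(x), 0}`,
expressed as a function of the value `v = F(x)`. -/
noncomputable def auxH (α : ℝ) (v τ : ℝ) : ℝ :=
  τ - (1 / α) * max (τ - v) 0

/-- The `u`-smoothed CVaR auxiliary function
`H̃(x,τ) = (1/u)·∫₀ᵘ (τ + ξ - (1/α)·max{τ + ξ - F(x), 0}) dξ`,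
expressed as a function of the value `v = F(x)`. -/
noncomputable def smoothAuxH (α u : ℝ) (v τ : ℝ) : ℝ :=
  (1 / u) * ∫ ξ in (0:ℝ)..u, (τ + ξ - (1 / α) * max (τ + ξ - v) 0)

theorem stmt0 (n : ℕ) (hn : 1 ≤ n) (α u : ℝ) (hα : α ∈ Set.Ioc (0:ℝ) 1) (hu : 0 < u)
    (F : EuclideanSpace ℝ (Fin n) → ℝ)
    (hF : ∀ x : EuclideanSpace ℝ (Fin n), (∀ i, x i ∈ Set.Icc (0:ℝ) 1) →
      F x ∈ Set.Icc (0:ℝ) 1)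
    (x : EuclideanSpace ℝ (Fin n)) (hx : ∀ i, x i ∈ Set.Icc (0:ℝ) 1)
    (τ : ℝ) (hτ : τ ∈ Set.Icc (0:ℝ) 1) :
    |auxH α (F x) τ - smoothAuxH α u (F x) τ| ≤ u * (1 + 1 / α) / 2 := by
  set v := F x with hv
  have hα0 : 0 < α := hα.1
  have hα0' : 0 ≤ 1 / α := by positivity
  have hcont : Continuous (fun ξ : ℝ => τ + ξ - (1 / α) * max (τ + ξ - v) 0) := by
    fun_prop
  have hint : IntervalIntegrable (fun ξ : ℝ => τ + ξ - (1 / α) * max (τ + ξ - v) 0)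
      volume 0 u := hcont.intervalIntegrable _ _
  have key : auxH α v τ - smoothAuxH α u v τ
      = (1 / u) * ∫ ξ in (0:ℝ)..u,
          (auxH α v τ - (τ + ξ - (1 / α) * max (τ + ξ - v) 0)) := by
    rw [intervalIntegral.integral_sub (intervalIntegrable_const) hint]
    simp only [smoothAuxH, intervalIntegral.integral_const, sub_zero, smul_eq_mul]
    field_simp
    congr 2
    funext ξ
    ring
  rw [key]
  have hb : ∀ ξ ∈ Set.Icc (0:ℝ) u,
      |auxH α v τ - (τ + ξ - (1 / α) * max (τ + ξ - v) 0)| ≤ (1 + 1 / α) * ξ := by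
    intro ξ hξ
    have hξ0 : 0 ≤ ξ := hξ.1
    have h2 : auxH α v τ - (τ + ξ - (1 / α) * max (τ + ξ - v) 0)
        = -ξ - (1 / α) * (max (τ - v) 0 - max (τ + ξ - v) 0) := by
      unfold auxH; ring
    rw [h2]
    have hmax : |max (τ - v) 0 - max (τ + ξ - v) 0| ≤ ξ := by
      calc |max (τ - v) 0 - max (τ + ξ - v) 0| ≤ |(τ - v) - (τ + ξ - v)| :=
            abs_max_sub_max_le_abs _ _ _
        _ = ξ := by rw [show (τ - v) - (τ + ξ - v) = -ξ by ring, abs_neg, abs_of_nonneg hξ0]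
    calc |-ξ - (1 / α) * (max (τ - v) 0 - max (τ + ξ - v) 0)|
        ≤ |-ξ| + |(1 / α) * (max (τ - v) 0 - max (τ + ξ - v) 0)| := abs_sub _ _
      _ ≤ ξ + (1 / α) * ξ := by
          rw [abs_neg, abs_of_nonneg hξ0, abs_mul, abs_of_nonneg hα0']
          exact add_le_add le_rfl (mul_le_mul_of_nonneg_left hmax hα0')
      _ = (1 + 1 / α) * ξ := by ring
  have habs : |∫ ξ in (0:ℝ)..u, (auxH α v τ - (τ + ξ - (1 / α) * max (τ + ξ - v) 0))|
      ≤ ∫ ξ in (0:ℝ)..u, (1 + 1 / α) * ξ := by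
    apply intervalIntegral.abs_integral_le_integral_abs hu.le |>.trans
    apply intervalIntegral.integral_mono_on hu.le
    · exact ((continuous_const.sub hcont).abs).intervalIntegrable _ _
    · exact (continuous_const.mul continuous_id).intervalIntegrable _ _
    · exact hb
  have hval : (∫ ξ in (0:ℝ)..u, (1 + 1 / α) * ξ) = (1 + 1 / α) * (u ^ 2 / 2) := by
    rw [intervalIntegral.integral_const_mul, integral_id]
    ring
  rw [abs_mul, abs_of_nonneg (by positivity : (0:ℝ) ≤ 1 / u)]
  calc (1 / u) * |∫ ξ in (0:ℝ)..u, (auxH α v τ - (τ + ξ - (1 / α) * max (τ + ξ - v) 0))|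
      ≤ (1 / u) * ((1 + 1 / α) * (u ^ 2 / 2)) := by
        rw [← hval]; exact mul_le_mul_of_nonneg_left habs (by positivity)
    _ = u * (1 + 1 / α) / 2 := by field_simp
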